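/- Let X and Y be compact metric spaces, f : X → X and q : Y → Y continuous maps, and π : Y → X a continuous surjection with f ∘ π = π ∘ q. Then the topological entropy of f is at most the topological entropy of q. If moreover sup_{x ∈ X} #π^{−1}(x) < ∞ (the fibers of π have uniformly bounded finite cardinality), then the topological entropies of f and q are equal. -/

import Mathlib

open Set Dynamics Uniformity UniformSpace Filter ENNReal EReal
open scoped SetRel

namespace EntropySemiconjAux

lemma symmRel_comp {Z : Type*} {W : Set (Z × Z)} (h : SetRel.IsSymm W) :
    SetRel.IsSymm (W ○ W) := by
  haveI := h
  exact SetRel.isSymm_comp_self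

variable {X Y : Type*} [MetricSpace X] [CompactSpace X] [MetricSpace Y] [CompactSpace Y]

/-- The key counting estimate: a `(W ○ W, n*m)`-separated set in `Y` has cardinality at most
`(minimal (U, n*m)-cover of X) * N^n`. -/
lemma key_count (f : X → X) (q : Y → Y) (π : Y → X)
    (hf : Continuous f) (hq : Continuous q) (hπ : Continuous π)
    (hsemi : f ∘ π = π ∘ q)
    {N : ℕ} (hN : ∀ x : X, (π ⁻¹' {x}).Finite ∧ Nat.card (π ⁻¹' {x} : Set Y) ≤ N)
    {W : Set (Y × Y)} (hWu : W ∈ 𝓤 Y) (hWo : IsOpen W) (hWs : SetRel.IsSymm W)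
    {m : ℕ} (hm : 0 < m) :
    ∃ U ∈ 𝓤 X, ∀ n : ℕ,
      netMaxcard q Set.univ (W ○ W) (n * m) ≤
        coverMincard f Set.univ U (n * m) * (N : ℕ∞) ^ n := by
  classical
  have hWrefl : SetRel.id ⊆ W := by
    rintro ⟨a, b⟩ hab
    rw [SetRel.mem_id] at hab
    exact hab ▸ refl_mem_uniformity hWu
  have hscj : Function.Semiconj π q f := fun y => (congrFun hsemi y).symm
  have hsemi' : ∀ (k : ℕ) (y : Y), π (q^[k] y) = f^[k] (π y) := fun k => hscj.iterate_right k
  -- Around each `x`, an open set whose `π`-preimage is covered by dynamical `W`-balls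
  -- centered in the fiber of `x`.
  have hG : ∀ x : X, ∃ Ox : Set X, IsOpen Ox ∧ x ∈ Ox ∧
      ∀ y : Y, π y ∈ Ox → ∃ z : Y, π z = x ∧ (z, y) ∈ dynEntourage q W m := by
    intro x
    set G : Set Y := ⋃ z ∈ π ⁻¹' {x}, ball z (dynEntourage q W m) with hGdef
    have hGopen : IsOpen G :=
      isOpen_biUnion fun z _ => (isOpen.dynEntourage hq hWo m).preimage (Continuous.prodMk_right z)
    have hfibG : π ⁻¹' {x} ⊆ G := fun z hzf =>
      mem_biUnion hzf (mem_dynEntourage.2 fun k _ => hWrefl (SetRel.mem_id.2 rfl))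
    refine ⟨(π '' Gᶜ)ᶜ, (hπ.isClosedMap _ hGopen.isClosed_compl).isOpen_compl, ?_, ?_⟩
    · rintro ⟨z, hz, hπz⟩
      exact hz (hfibG hπz)
    · intro y hy
      have hyG : y ∈ G := by
        by_contra hyG
        exact hy ⟨y, hyG, rfl⟩
      simp only [hGdef, mem_iUnion, mem_preimage, mem_singleton_iff, exists_prop] at hyG
      obtain ⟨z, hz1, hz2⟩ := hyG
      exact ⟨z, hz1, hz2⟩
  choose O hOopen hxO hOfib using hG
  obtain ⟨U, hUu, hUleb⟩ :=
    lebesgue_number_lemma isCompact_univ hOopen (fun x _ => mem_iUnion.2 ⟨x, hxO x⟩)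
  obtain ⟨U, hUu, hUs, hUleb⟩ : ∃ U ∈ 𝓤 X, SetRel.IsSymm U ∧
      ∀ x ∈ (univ : Set X), ∃ i, ball x U ⊆ O i :=
    ⟨_, symmetrize_mem_uniformity hUu, SetRel.isSymm_symmetrize, fun x hx =>
      (hUleb x hx).imp fun i hi => (ball_mono SetRel.symmetrize_subset_self x).trans hi⟩
  choose c hc using fun x => hUleb x (mem_univ x)
  refine ⟨U, hUu, fun n => ?_⟩
  have hfin : coverMincard f Set.univ U (n * m) < ⊤ :=
    coverMincard_finite_of_isCompact_uniformContinuous isCompact_univ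
      (CompactSpace.uniformContinuous_of_continuous hf) hUu (n * m)
  obtain ⟨s, hscov, hscard⟩ := (coverMincard_finite_iff f Set.univ U (n * m)).1 hfin
  rw [← hscard, netMaxcard]
  refine iSup₂_le fun E' hE' => ?_
  -- choose cover points
  have hcov : ∀ y : Y, ∃ x, x ∈ s ∧ (x, π y) ∈ dynEntourage f U (n * m) := by
    intro y
    have h := hscov (mem_univ (π y))
    simp only [mem_iUnion, Finset.mem_coe, exists_prop] at h
    exact h.imp fun x hx => ⟨hx.1, (SetRel.comm (dynEntourage f U (n * m))).1 hx.2⟩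
  choose xx hxxs hxx using hcov
  -- choose fiber points shadowing blocks of length m
  have hz : ∀ (y : Y) (j : Fin n), ∃ z : Y,
      π z = c (f^[(j : ℕ) * m] (xx y)) ∧
        ∀ i < m, (q^[i] z, q^[i + (j : ℕ) * m] y) ∈ W := by
    intro y j
    have hjm : (j : ℕ) * m < n * m := (Nat.mul_lt_mul_right hm).2 j.2
    have h1 : (f^[(j : ℕ) * m] (xx y), f^[(j : ℕ) * m] (π y)) ∈ U :=
      mem_dynEntourage.1 (hxx y) _ hjm
    have h2 : f^[(j : ℕ) * m] (π y) ∈ O (c (f^[(j : ℕ) * m] (xx y))) :=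
      hc (f^[(j : ℕ) * m] (xx y)) h1
    rw [← hsemi'] at h2
    obtain ⟨z, hz1, hz2⟩ := hOfib _ _ h2
    refine ⟨z, hz1, fun i hi => ?_⟩
    have h3 := mem_dynEntourage.1 hz2 i hi
    rwa [← Function.iterate_add_apply] at h3
  choose zz hzz1 hzz2 using hz
  -- count each class of the cover point
  have hfilter : ∀ x ∈ s, (E'.filter (fun y => xx y = x)).card ≤ N ^ n := by
    intro x _
    have hmap : ∀ y ∈ E'.filter (fun y => xx y = x),
        (fun j : Fin n => zz y j) ∈
          Fintype.piFinset (fun j : Fin n => (hN (c (f^[(j : ℕ) * m] x))).1.toFinset) := by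
      intro y hy
      rw [Finset.mem_filter] at hy
      rw [Fintype.mem_piFinset]
      intro j
      rw [Set.Finite.mem_toFinset]
      have h := hzz1 y j
      rw [hy.2] at h
      exact h
    have hinj : Set.InjOn (fun y => fun j : Fin n => zz y j)
        (E'.filter (fun y => xx y = x)) := by
      intro y hy y' hy' heq
      rw [Finset.coe_filter, Set.mem_setOf_eq] at hy hy'
      have hclose : ∀ k < n * m, (q^[k] y, q^[k] y') ∈ W ○ W := by
        intro k hk
        have hjlt : k / m < n := (Nat.div_lt_iff_lt_mul hm).2 hk
        have h1 := hzz2 y ⟨k / m, hjlt⟩ (k % m) (Nat.mod_lt k hm)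
        have h2 := hzz2 y' ⟨k / m, hjlt⟩ (k % m) (Nat.mod_lt k hm)
        simp only [Nat.mod_add_div'] at h1 h2
        have hzeq : zz y ⟨k / m, hjlt⟩ = zz y' ⟨k / m, hjlt⟩ := congrFun heq ⟨k / m, hjlt⟩
        rw [hzeq] at h1
        exact SetRel.prodMk_mem_comp ((SetRel.comm W).1 h1) h2
      have hWWrefl : SetRel.id ⊆ W ○ W := by
        haveI : SetRel.IsRefl W := SetRel.id_subset_iff.1 hWrefl
        exact hWrefl.trans SetRel.left_subset_comp
      exact hE'.2.elim_set hy.1 hy'.1 y' (mem_dynEntourage.2 hclose)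
        (mem_dynEntourage.2 fun k _ => hWWrefl (SetRel.mem_id.2 rfl))
    have hcard := Finset.card_le_card_of_injOn _ hmap hinj
    refine hcard.trans ?_
    rw [Fintype.card_piFinset]
    calc ∏ j : Fin n, ((hN (c (f^[(j : ℕ) * m] x))).1.toFinset).card
        ≤ ∏ _j : Fin n, N := by
          refine Finset.prod_le_prod' fun j _ => ?_
          have h := (hN (c (f^[(j : ℕ) * m] x))).2
          rwa [Nat.card_coe_set_eq,
            Set.ncard_eq_toFinset_card _ (hN (c (f^[(j : ℕ) * m] x))).1] at h
      _ = N ^ n := by rw [Finset.prod_const, Finset.card_univ, Fintype.card_fin]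
  have hsub : E' ⊆ s.biUnion (fun x => E'.filter (fun y => xx y = x)) := by
    intro y hy
    exact Finset.mem_biUnion.2 ⟨xx y, hxxs y, Finset.mem_filter.2 ⟨hy, rfl⟩⟩
  have htotal : E'.card ≤ s.card * N ^ n := by
    calc E'.card ≤ (s.biUnion (fun x => E'.filter (fun y => xx y = x))).card :=
          Finset.card_le_card hsub
      _ ≤ ∑ x ∈ s, (E'.filter (fun y => xx y = x)).card := Finset.card_biUnion_le
      _ ≤ ∑ _x ∈ s, N ^ n := Finset.sum_le_sum hfilter
      _ = s.card * N ^ n := by rw [Finset.sum_const, smul_eq_mul]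
  exact_mod_cast htotal

/-- For every `m ≥ 1`, `h(q) ≤ h(f) + log N / m`. -/
lemma entropy_le_add (f : X → X) (q : Y → Y) (π : Y → X)
    (hf : Continuous f) (hq : Continuous q) (hπ : Continuous π)
    (hsurj : Function.Surjective π) (hsemi : f ∘ π = π ∘ q)
    {N : ℕ} (hN : ∀ x : X, (π ⁻¹' {x}).Finite ∧ Nat.card (π ⁻¹' {x} : Set Y) ≤ N)
    (hYne : Nonempty Y) {m : ℕ} (hm : 0 < m) :
    coverEntropy q Set.univ ≤
      coverEntropy f Set.univ + log (N : ℝ≥0∞) / (m : EReal) := by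
  classical
  have hXne : Nonempty X := ⟨π (Classical.arbitrary Y)⟩
  have hN1 : 1 ≤ N := by
    obtain ⟨x⟩ := hXne
    obtain ⟨y, hy⟩ := hsurj x
    haveI : Finite (π ⁻¹' {x} : Set Y) := (hN x).1.to_subtype
    haveI : Nonempty (π ⁻¹' {x} : Set Y) := ⟨⟨y, hy⟩⟩
    exact Nat.card_pos.trans_le (hN x).2
  have hL0 : (0 : EReal) ≤ log (N : ℝ≥0∞) := by
    apply zero_le_log_iff.2
    exact_mod_cast hN1
  have hLtop : log (N : ℝ≥0∞) ≠ ⊤ := by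
    rw [← lt_top_iff_ne_top, log_lt_top_iff]
    exact ENNReal.natCast_lt_top N
  set C : EReal := log (N : ℝ≥0∞) / (m : EReal) with hCdef
  have hCreal : C = ((((log (N : ℝ≥0∞)).toReal) / (m : ℝ) : ℝ) : EReal) := by
    rw [hCdef, EReal.coe_div, EReal.coe_toReal hLtop (ne_bot_of_le_ne_bot (by simp) hL0),
      EReal.coe_coe_eq_natCast]
  have hCbot : C ≠ ⊥ := by rw [hCreal]; exact EReal.coe_ne_bot _
  have hCtop : C ≠ ⊤ := by rw [hCreal]; exact EReal.coe_ne_top _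
  refine iSup₂_le fun V hV => ?_
  obtain ⟨W1, hW1u, hW1s, hW1⟩ := comp_symm_mem_uniformity_sets hV
  obtain ⟨W2, hW2u, hW2s, hW2⟩ := comp_symm_mem_uniformity_sets hW1u
  obtain ⟨W3, hW3u, hW3s, hW3⟩ := comp_symm_mem_uniformity_sets hW2u
  obtain ⟨W, ⟨hWu, hWo, hWs⟩, hWsub⟩ := uniformity_hasBasis_open_symmetric.mem_iff.1 hW3u
  have hWrefl : SetRel.id ⊆ W := by
    rintro ⟨a, b⟩ hab
    rw [SetRel.mem_id] at hab
    exact hab ▸ refl_mem_uniformity hWu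
  have h2 : W ○ W ⊆ W2 := (SetRel.comp_subset_comp hWsub hWsub).trans hW3
  have h4 : (W ○ W) ○ (W ○ W) ⊆ W1 := (SetRel.comp_subset_comp h2 h2).trans hW2
  have hA : ((W ○ W) ○ (W ○ W)) ○ ((W ○ W) ○ (W ○ W)) ⊆ V :=
    (SetRel.comp_subset_comp h4 h4).trans hW1
  obtain ⟨U, hUu, hcount⟩ := key_count f q π hf hq hπ hsemi hN hWu hWo hWs hm
  set u : ℕ → EReal := fun k => log (coverMincard f Set.univ U k) / (k : EReal) with hu
  have hstep : ∀ n : ℕ, 1 ≤ n →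
      coverEntropyEntourage q Set.univ V ≤ u (n * m) + C := by
    intro n hn
    have hnm : 0 < n * m := Nat.mul_pos hn hm
    have hAsymm : SetRel.IsSymm ((W ○ W) ○ (W ○ W)) := symmRel_comp (symmRel_comp hWs)
    have c1 : coverEntropyEntourage q Set.univ V ≤
        coverEntropyEntourage q Set.univ (((W ○ W) ○ (W ○ W)) ○ ((W ○ W) ○ (W ○ W))) :=
      coverEntropyEntourage_antitone q Set.univ hA
    have c2 := coverEntropyEntourage_le_log_coverMincard_div
      (U := (W ○ W) ○ (W ○ W)) (mapsTo_univ q Set.univ) hnm.ne'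
    have c3 : coverMincard q Set.univ ((W ○ W) ○ (W ○ W)) (n * m) ≤
        netMaxcard q Set.univ (W ○ W) (n * m) :=
      by
        haveI : W.IsRefl := SetRel.id_subset_iff.1 hWrefl
        haveI : (W ○ W).IsRefl := SetRel.id_subset_iff.1 (hWrefl.trans SetRel.left_subset_comp)
        haveI := symmRel_comp hWs
        exact coverMincard_le_netMaxcard q Set.univ (n * m)
    have c4 := (c3.trans (hcount n))
    have c5 : log (coverMincard q Set.univ ((W ○ W) ○ (W ○ W)) (n * m)) ≤
        log (coverMincard f Set.univ U (n * m)) + (n : EReal) * log (N : ℝ≥0∞) := by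
      have h := log_monotone (ENat.toENNReal_le.2 c4)
      rwa [ENat.toENNReal_mul, ENat.toENNReal_pow, log_mul_add, log_pow,
        ENat.toENNReal_coe] at h
    have hlogc : (0 : EReal) ≤ log (coverMincard f Set.univ U (n * m)) :=
      by
        have h1 := ENat.toENNReal_le.2 ((one_le_coverMincard_iff f univ U (n * m)).2 univ_nonempty)
        exact zero_le_log_iff.2 (by exact_mod_cast h1)
    have hnL : (0 : EReal) ≤ (n : EReal) * log (N : ℝ≥0∞) :=
      mul_nonneg (Nat.cast_nonneg' n) hL0
    have hnm0 : (0 : EReal) < ((n * m : ℕ) : EReal) := Nat.cast_pos'.2 hnm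
    have c6 : coverEntropyEntourage q Set.univ V ≤
        (log (coverMincard f Set.univ U (n * m)) + (n : EReal) * log (N : ℝ≥0∞)) /
          ((n * m : ℕ) : EReal) := by
      refine (c1.trans c2).trans ?_
      exact monotone_div_right_of_nonneg hnm0.le (log_monotone (ENat.toENNReal_le.2 c4) |>.trans_eq
        (by rw [ENat.toENNReal_mul, ENat.toENNReal_pow, log_mul_add, log_pow,
          ENat.toENNReal_coe]))
    refine c6.trans_eq ?_
    rw [div_right_distrib_of_nonneg hlogc hnL]
    congr 1
    -- (n * log N) / (n * m) = log N / m
    have hn0 : ((n : ℕ) : EReal) ≠ 0 := (Nat.cast_pos'.2 hn).ne'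
    rw [EReal.natCast_mul, mul_comm ((n : ℕ) : EReal) (log (N : ℝ≥0∞)), ← EReal.div_div,
      ← EReal.mul_div, EReal.div_self (natCast_ne_bot n) (natCast_ne_top n) hn0, mul_one]
  -- pass to the limit
  have hle : coverEntropyEntourage q Set.univ V ≤
      atTop.liminf (fun n : ℕ => u (n * m) + C) :=
    le_liminf_of_le (by isBoundedDefault)
      (eventually_atTop.2 ⟨1, fun n hn => hstep n hn⟩)
  have hsub : atTop.limsup (fun n : ℕ => u (n * m)) ≤ atTop.limsup u := by
    have hmap : Filter.map (fun n : ℕ => n * m) atTop ≤ atTop :=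
      Filter.tendsto_atTop_mono (fun n => Nat.le_mul_of_pos_right n hm) Filter.tendsto_id
    have heq : atTop.limsup (fun n : ℕ => u (n * m)) =
        (Filter.map (fun n : ℕ => n * m) atTop).limsup u := by
      rw [Filter.limsup_eq, Filter.limsup_eq]
      simp only [Filter.eventually_map]
    rw [heq]
    exact limsup_le_limsup_of_le hmap
  have husup : atTop.limsup u ≤ coverEntropy f Set.univ :=
    coverEntropyEntourage_le_coverEntropy f Set.univ hUu
  have hubot : atTop.limsup (fun n : ℕ => u (n * m)) ≠ ⊥ ∨
      atTop.limsup (fun _ : ℕ => C) ≠ ⊤ := by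
    right
    rw [limsup_const]
    exact hCtop
  have hutop : atTop.limsup (fun n : ℕ => u (n * m)) ≠ ⊤ ∨
      atTop.limsup (fun _ : ℕ => C) ≠ ⊥ := by
    right
    rw [limsup_const]
    exact hCbot
  calc coverEntropyEntourage q Set.univ V
      ≤ atTop.liminf (fun n : ℕ => u (n * m) + C) := hle
    _ ≤ atTop.limsup (fun n : ℕ => u (n * m) + C) := liminf_le_limsup
    _ ≤ atTop.limsup (fun n : ℕ => u (n * m)) + atTop.limsup (fun _ : ℕ => C) :=
        EReal.limsup_add_le hubot hutop
    _ = atTop.limsup (fun n : ℕ => u (n * m)) + C := by rw [limsup_const]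
    _ ≤ atTop.limsup u + C := add_le_add_left hsub C
    _ ≤ coverEntropy f Set.univ + C := add_le_add_left husup C

end EntropySemiconjAux

open EntropySemiconjAux in
/-- If `π : Y → X` is a continuous surjective semi-conjugacy from
`(Y, q)` to `(X, f)` between compact metric spaces, then the topological entropy of `f`
is at most that of `q`; if moreover the fibers of `π` have uniformly bounded finite
cardinality, the two entropies are equal. -/
theorem entropy_semiconjugacy {X Y : Type*}
    [MetricSpace X] [CompactSpace X] [MetricSpace Y] [CompactSpace Y]
    (f : X → X) (q : Y → Y) (π : Y → X)
    (hf : Continuous f) (hq : Continuous q) (hπ : Continuous π)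
    (hsurj : Function.Surjective π) (hsemi : f ∘ π = π ∘ q) :
    coverEntropy f (Set.univ : Set X) ≤ coverEntropy q (Set.univ : Set Y) ∧
    ((∃ N : ℕ, ∀ x : X, (π ⁻¹' {x}).Finite ∧ Nat.card (π ⁻¹' {x} : Set Y) ≤ N) →
      coverEntropy f (Set.univ : Set X) = coverEntropy q (Set.univ : Set Y)) := by
  have hsc : Function.Semiconj π q f := fun y => (congrFun hsemi y).symm
  have huπ : UniformContinuous π := CompactSpace.uniformContinuous_of_continuous hπ
  have h1 : coverEntropy f (Set.univ : Set X) ≤ coverEntropy q (Set.univ : Set Y) := by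
    have h := coverEntropy_image_le_of_uniformContinuous hsc huπ Set.univ
    rwa [Set.image_univ, hsurj.range_eq] at h
  refine ⟨h1, ?_⟩
  rintro ⟨N, hN⟩
  refine le_antisymm h1 ?_
  rcases isEmpty_or_nonempty Y with hY | hY
  · rw [Set.univ_eq_empty_iff.2 hY, coverEntropy_empty]
    exact bot_le
  · have hXne : Nonempty X := ⟨π (Classical.arbitrary Y)⟩
    by_cases htop : coverEntropy f (Set.univ : Set X) = ⊤
    · rw [htop]
      exact le_top
    have hN1 : 1 ≤ N := by
      obtain ⟨x⟩ := hXne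
      obtain ⟨y, hy⟩ := hsurj x
      haveI : Finite (π ⁻¹' {x} : Set Y) := (hN x).1.to_subtype
      haveI : Nonempty (π ⁻¹' {x} : Set Y) := ⟨⟨y, hy⟩⟩
      exact Nat.card_pos.trans_le (hN x).2
    have hL0 : (0 : EReal) ≤ log (N : ℝ≥0∞) := by
      apply zero_le_log_iff.2
      exact_mod_cast hN1
    have hLtop : log (N : ℝ≥0∞) ≠ ⊤ := by
      rw [← lt_top_iff_ne_top, log_lt_top_iff]
      exact ENNReal.natCast_lt_top N
    have hLbot : log (N : ℝ≥0∞) ≠ ⊥ := ne_bot_of_le_ne_bot (by simp) hL0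
    set a := coverEntropy f (Set.univ : Set X) with ha
    have ha0 : (0 : EReal) ≤ a := coverEntropy_nonneg f univ_nonempty
    have habot : a ≠ ⊥ := ne_bot_of_le_ne_bot (by simp) ha0
    by_contra hlt
    rw [not_le] at hlt
    obtain ⟨r, har, hrq⟩ := EReal.exists_between_coe_real hlt
    have har : a.toReal < r := by
      rw [← EReal.coe_lt_coe_iff, EReal.coe_toReal htop habot]
      exact har
    have hd : (0 : ℝ) < r - a.toReal := sub_pos.2 har
    set lr := (log (N : ℝ≥0∞)).toReal with hlr
    have hlrL : ((lr : ℝ) : EReal) = log (N : ℝ≥0∞) := by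
      rw [hlr]; exact EReal.coe_toReal hLtop hLbot
    have hlr0 : 0 ≤ lr := by
      have h0 : (0 : EReal) ≤ ((lr : ℝ) : EReal) := hlrL ▸ hL0
      exact_mod_cast h0
    obtain ⟨m, hmgt⟩ := exists_nat_gt (lr / (r - a.toReal))
    have hm0 : 0 < m := by
      have := (div_nonneg hlr0 hd.le).trans_lt hmgt
      exact_mod_cast this
    have hfrac : lr / (m : ℝ) < r - a.toReal := by
      have hm' : (0 : ℝ) < (m : ℝ) := by exact_mod_cast hm0
      rw [div_lt_iff₀ hm', mul_comm]
      calc lr = (lr / (r - a.toReal)) * (r - a.toReal) := by field_simp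
        _ < (m : ℝ) * (r - a.toReal) := mul_lt_mul_of_pos_right hmgt hd
    have hkey := entropy_le_add f q π hf hq hπ hsurj hsemi hN hY hm0
    have hCform : a + log (N : ℝ≥0∞) / (m : EReal) =
        ((a.toReal + lr / (m : ℝ) : ℝ) : EReal) := by
      rw [EReal.coe_add, EReal.coe_div, hlrL, EReal.coe_coe_eq_natCast,
        EReal.coe_toReal htop habot]
    have hlast : a + log (N : ℝ≥0∞) / (m : EReal) < (r : EReal) := by
      rw [hCform, EReal.coe_lt_coe_iff]
      linarith
    exact absurd ((hkey.trans_lt hlast).trans hrq) (lt_irrefl _)
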